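/- Let X₁, X₂, W₁, Y₂ be discrete random variables on finite alphabets. Then H(W₁ | Y₂) ≥ H(X₁) − I(X₁, X₂; Y₂) − H(X₁, X₂ | W₁, Y₂) − H(X₁ | W₁, X₂). -/
import Mathlib


open Finset

/-- Probability mass of the value `a` of the random variable `X` under the
weight function `μ` on a finite sample space. -/
noncomputable def pmf' {Ω A : Type*} [Fintype Ω] [DecidableEq A]
    (μ : Ω → ℝ) (X : Ω → A) (a : A) : ℝ :=
  ∑ ω, if X ω = a then μ ω else 0

/-- Shannon entropy (base 2) of a discrete random variable. -/
noncomputable def H' {Ω A : Type*} [Fintype Ω] [Fintype A] [DecidableEq A]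
    (μ : Ω → ℝ) (X : Ω → A) : ℝ :=
  -∑ a, pmf' μ X a * Real.logb 2 (pmf' μ X a)

/-- Conditional entropy `H(X | Y)`. -/
noncomputable def condH {Ω A B : Type*} [Fintype Ω] [Fintype A] [Fintype B]
    [DecidableEq A] [DecidableEq B] (μ : Ω → ℝ) (X : Ω → A) (Y : Ω → B) : ℝ :=
  H' μ (fun ω => (X ω, Y ω)) - H' μ Y

/-- Mutual information `I(X; Y)`. -/
noncomputable def mi {Ω A B : Type*} [Fintype Ω] [Fintype A] [Fintype B]
    [DecidableEq A] [DecidableEq B] (μ : Ω → ℝ) (X : Ω → A) (Y : Ω → B) : ℝ :=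
  H' μ X + H' μ Y - H' μ (fun ω => (X ω, Y ω))

/-- Conditional mutual information `I(X; Y | Z) = H(X|Z) - H(X|Y,Z)`. -/
noncomputable def condMI {Ω A B C : Type*} [Fintype Ω] [Fintype A] [Fintype B] [Fintype C]
    [DecidableEq A] [DecidableEq B] [DecidableEq C]
    (μ : Ω → ℝ) (X : Ω → A) (Y : Ω → B) (Z : Ω → C) : ℝ :=
  condH μ X Z - condH μ X (fun ω => (Y ω, Z ω))

/-- `X` and `Y` are conditionally independent given `Z`. -/
def CondIndepRV {Ω A B C : Type*} [Fintype Ω] [DecidableEq A] [DecidableEq B] [DecidableEq C]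
    (μ : Ω → ℝ) (X : Ω → A) (Y : Ω → B) (Z : Ω → C) : Prop :=
  ∀ (a : A) (b : B) (c : C),
    pmf' μ (fun ω => (X ω, Y ω, Z ω)) (a, b, c) * pmf' μ Z c =
      pmf' μ (fun ω => (X ω, Z ω)) (a, c) * pmf' μ (fun ω => (Y ω, Z ω)) (b, c)

/-- `μ` is a probability distribution on the finite sample space. -/
def IsProb {Ω : Type*} [Fintype Ω] (μ : Ω → ℝ) : Prop :=
  (∀ ω, 0 ≤ μ ω) ∧ ∑ ω, μ ω = 1

section Aux

variable {Ω A B : Type*} [Fintype Ω] [Fintype A] [Fintype B]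
  [DecidableEq A] [DecidableEq B]

lemma pmf'_nonneg (μ : Ω → ℝ) (hμ : ∀ ω, 0 ≤ μ ω) (X : Ω → A) (a : A) :
    0 ≤ pmf' μ X a := by
  apply Finset.sum_nonneg
  intro ω _
  split <;> simp [hμ ω]

lemma pmf'_marginal (μ : Ω → ℝ) (X : Ω → A) (Y : Ω → B) (b : B) :
    ∑ a, pmf' μ (fun ω => (X ω, Y ω)) (a, b) = pmf' μ Y b := by
  unfold pmf'
  rw [Finset.sum_comm]
  refine Finset.sum_congr rfl fun ω _ => ?_
  simp only [Prod.mk.injEq]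
  by_cases h : Y ω = b
  · simp [h]
  · simp [h]

lemma pmf'_le_marginal (μ : Ω → ℝ) (hμ : ∀ ω, 0 ≤ μ ω) (X : Ω → A) (Y : Ω → B)
    (a : A) (b : B) :
    pmf' μ (fun ω => (X ω, Y ω)) (a, b) ≤ pmf' μ Y b := by
  rw [← pmf'_marginal μ X Y b]
  exact Finset.single_le_sum (f := fun a => pmf' μ (fun ω => (X ω, Y ω)) (a, b))
    (fun a _ => pmf'_nonneg μ hμ _ _) (Finset.mem_univ a)

/-- `H(Y) ≤ H(X, Y)`. -/
lemma H'_snd_le (μ : Ω → ℝ) (hμ : ∀ ω, 0 ≤ μ ω) (X : Ω → A) (Y : Ω → B) :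
    H' μ Y ≤ H' μ (fun ω => (X ω, Y ω)) := by
  unfold H'
  rw [neg_le_neg_iff]
  have hmarg : ∀ b : B, pmf' μ Y b * Real.logb 2 (pmf' μ Y b)
      = ∑ a, pmf' μ (fun ω => (X ω, Y ω)) (a, b) * Real.logb 2 (pmf' μ Y b) := by
    intro b
    rw [← Finset.sum_mul, pmf'_marginal]
  calc ∑ p : A × B, pmf' μ (fun ω => (X ω, Y ω)) p *
          Real.logb 2 (pmf' μ (fun ω => (X ω, Y ω)) p)
      = ∑ a, ∑ b, pmf' μ (fun ω => (X ω, Y ω)) (a, b) *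
          Real.logb 2 (pmf' μ (fun ω => (X ω, Y ω)) (a, b)) := by
        rw [Fintype.sum_prod_type]
    _ ≤ ∑ a, ∑ b, pmf' μ (fun ω => (X ω, Y ω)) (a, b) *
          Real.logb 2 (pmf' μ Y b) := by
        refine Finset.sum_le_sum fun a _ => Finset.sum_le_sum fun b _ => ?_
        rcases eq_or_lt_of_le (pmf'_nonneg μ hμ (fun ω => (X ω, Y ω)) (a, b)) with h | h
        · rw [← h]; simp
        · refine mul_le_mul_of_nonneg_left ?_ h.le
          exact Real.logb_le_logb_of_le one_lt_two h
            (pmf'_le_marginal μ hμ X Y a b)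
    _ = ∑ b, ∑ a, pmf' μ (fun ω => (X ω, Y ω)) (a, b) *
          Real.logb 2 (pmf' μ Y b) := Finset.sum_comm
    _ = ∑ b, pmf' μ Y b * Real.logb 2 (pmf' μ Y b) := by
        refine Finset.sum_congr rfl fun b _ => (hmarg b).symm

/-- Entropy is invariant under injective relabeling. -/
lemma H'_comp_inj {C : Type*} [Fintype C] [DecidableEq C]
    (μ : Ω → ℝ) (X : Ω → A) (f : A → C) (hf : Function.Injective f) :
    H' μ (fun ω => f (X ω)) = H' μ X := by
  have hpmf : ∀ a : A, pmf' μ (fun ω => f (X ω)) (f a) = pmf' μ X a := by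
    intro a
    unfold pmf'
    refine Finset.sum_congr rfl fun ω _ => ?_
    simp [hf.eq_iff]
  have hzero : ∀ c : C, c ∉ Finset.univ.image f →
      pmf' μ (fun ω => f (X ω)) c = 0 := by
    intro c hc
    unfold pmf'
    refine Finset.sum_eq_zero fun ω _ => ?_
    have : f (X ω) ≠ c := fun h => hc (by simpa [← h] using Finset.mem_image_of_mem f (Finset.mem_univ (X ω)))
    simp [this]
  unfold H'
  congr 1
  rw [← Finset.sum_subset (Finset.subset_univ (Finset.univ.image f))]
  · rw [Finset.sum_image (fun a _ a' _ h => hf h)]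
    exact Finset.sum_congr rfl fun a _ => by rw [hpmf a]
  · intro c _ hc
    rw [hzero c hc]; simp

end Aux

/-- Equivocation decomposition:
`H(W₁ | Y₂) ≥ H(X₁) − I(X₁, X₂; Y₂) − H(X₁, X₂ | W₁, Y₂) − H(X₁ | W₁, X₂)`. -/
theorem stmt13 {Ω A B C D : Type*} [Fintype Ω] [Fintype A] [Fintype B] [Fintype C] [Fintype D]
    [DecidableEq A] [DecidableEq B] [DecidableEq C] [DecidableEq D]
    (μ : Ω → ℝ) (hμ : IsProb μ)
    (X1 : Ω → A) (X2 : Ω → B) (W1 : Ω → C) (Y2 : Ω → D) :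
    condH μ W1 Y2 ≥
      H' μ X1 - mi μ (fun ω => (X1 ω, X2 ω)) Y2 -
        condH μ (fun ω => (X1 ω, X2 ω)) (fun ω => (W1 ω, Y2 ω)) -
        condH μ X1 (fun ω => (W1 ω, X2 ω)) := by
  obtain ⟨hμ0, -⟩ := hμ
  -- H(X1) ≤ H(X1, X2)
  have h1 : H' μ X1 ≤ H' μ (fun ω => (X1 ω, X2 ω)) := by
    have hs := H'_snd_le μ hμ0 X2 X1
    have hswap : H' μ (fun ω => (X2 ω, X1 ω)) = H' μ (fun ω => (X1 ω, X2 ω)) :=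
      H'_comp_inj μ (fun ω => (X1 ω, X2 ω)) Prod.swap Prod.swap_injective
    linarith
  -- H((X1,X2), Y2) ≤ H(W1, ((X1,X2), Y2))
  have h2 : H' μ (fun ω => ((X1 ω, X2 ω), Y2 ω)) ≤
      H' μ (fun ω => (W1 ω, ((X1 ω, X2 ω), Y2 ω))) :=
    H'_snd_le μ hμ0 W1 (fun ω => ((X1 ω, X2 ω), Y2 ω))
  -- rearrangement of the full joint entropy
  have h3 : H' μ (fun ω => (W1 ω, ((X1 ω, X2 ω), Y2 ω))) =
      H' μ (fun ω => ((X1 ω, X2 ω), (W1 ω, Y2 ω))) := by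
    have := H'_comp_inj μ (fun ω => ((X1 ω, X2 ω), (W1 ω, Y2 ω)))
      (fun p => (p.2.1, (p.1, p.2.2)))
      (by intro p q h; simp only [Prod.mk.injEq] at h; ext <;> simp_all)
    simpa using this
  -- H(X1 | W1, X2) ≥ 0
  have h4 : H' μ (fun ω => (W1 ω, X2 ω)) ≤
      H' μ (fun ω => (X1 ω, (W1 ω, X2 ω))) :=
    H'_snd_le μ hμ0 X1 (fun ω => (W1 ω, X2 ω))
  simp only [condH, mi, ge_iff_le] at *
  linarith
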